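/- Define the initial discrete fluxes F^0_j = F_j[u^0] for j∈{−N+1,…,N−1} (with interface pair (c(u^0_{−1/2},u^0_{1/2}),d(u^0_{−1/2},u^0_{1/2})) at j=0). Then max_{j∈{−N+1,…,N−1}} |F^0_j| ≤ max_{i=1,2} sup_{(a,b)∈[0,1]²}|G_i(a,b)| + 2L. -/

import Mathlib

open Set

noncomputable section

/-- The monotone graph `π̃` associated to an increasing capillary pressure function `π`. -/
def tildePi (π : ℝ → ℝ) (s : ℝ) : Set ℝ :=
  if s = 0 then Set.Iic (π 0) else if s = 1 then Set.Ici (π 1) else {π s}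

/-- The connection condition `π̃₁(c) ∩ π̃₂(d) ≠ ∅`. -/
def Connects (π₁ π₂ : ℝ → ℝ) (c d : ℝ) : Prop :=
  (tildePi π₁ c ∩ tildePi π₂ d).Nonempty

/-- The porosity `ϕ_{i(j)}` of the cell `(x_j, x_{j+1})` (indexed by `j`, representing the
unknown `u_{j+1/2}`): `ϕ₁` if `j < 0` (cell in `Ω₁`), `ϕ₂` if `j ≥ 0` (cell in `Ω₂`). -/
def phiCoef (ϕ₁ ϕ₂ : ℝ) (j : ℤ) : ℝ := if j < 0 then ϕ₁ else ϕ₂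

/-- The numerical flux `F_j[v]` through `x_j`, for a vector `v` (where `v j` stands for
`v_{j+1/2}`), with boundary data `ub = ū`, `uB = ū̄` and interface function `c`. -/
def numFlux (G₁ G₂ : ℝ → ℝ → ℝ) (φ₁ φ₂ : ℝ → ℝ) (c : ℝ → ℝ → ℝ) (δx : ℝ) (N : ℤ)
    (ub uB : ℝ) (v : ℤ → ℝ) (j : ℤ) : ℝ :=
  if j = -N then G₁ ub (v (-N))
  else if j = N then G₂ (v (N - 1)) uB
  else if j < 0 then G₁ (v (j - 1)) (v j) - (φ₁ (v j) - φ₁ (v (j - 1))) / δx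
  else if j = 0 then
    G₁ (v (-1)) (c (v (-1)) (v 0)) - 2 * (φ₁ (c (v (-1)) (v 0)) - φ₁ (v (-1))) / δx
  else G₂ (v (j - 1)) (v j) - (φ₂ (v j) - φ₂ (v (j - 1))) / δx

/-- The left-hand side of the implicit finite volume scheme at time step `n → n+1`,
cell `j`. -/
def schemeLHS (G₁ G₂ : ℝ → ℝ → ℝ) (φ₁ φ₂ : ℝ → ℝ) (c : ℝ → ℝ → ℝ)
    (ϕ₁ ϕ₂ δx δt : ℝ) (N : ℤ) (ubar ubbar : ℕ → ℝ) (u : ℕ → ℤ → ℝ)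
    (n : ℕ) (j : ℤ) : ℝ :=
  phiCoef ϕ₁ ϕ₂ j * (u (n + 1) j - u n j) * δx / δt
    + numFlux G₁ G₂ φ₁ φ₂ c δx N (ubar (n + 1)) (ubbar (n + 1)) (u (n + 1)) (j + 1)
    - numFlux G₁ G₂ φ₁ φ₂ c δx N (ubar (n + 1)) (ubbar (n + 1)) (u (n + 1)) j

/-- `u` takes values in `[0,1]` on the computational cells up to time level `M`. -/
def InRange (N : ℤ) (M : ℕ) (u : ℕ → ℤ → ℝ) : Prop :=
  ∀ n ≤ M, ∀ j ∈ Finset.Icc (-N) (N - 1), u n j ∈ Set.Icc (0 : ℝ) 1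

/-- `u` is a discrete solution of the implicit finite volume scheme. -/
def IsDiscreteSolution (G₁ G₂ : ℝ → ℝ → ℝ) (φ₁ φ₂ : ℝ → ℝ) (c : ℝ → ℝ → ℝ)
    (ϕ₁ ϕ₂ δx δt : ℝ) (N : ℤ) (M : ℕ) (ubar ubbar : ℕ → ℝ) (u : ℕ → ℤ → ℝ) : Prop :=
  InRange N M u ∧ ∀ n < M, ∀ j ∈ Finset.Icc (-N) (N - 1),
    schemeLHS G₁ G₂ φ₁ φ₂ c ϕ₁ ϕ₂ δx δt N ubar ubbar u n j = 0

/-- `u` is a discrete supersolution of the implicit finite volume scheme. -/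
def IsDiscreteSupersolution (G₁ G₂ : ℝ → ℝ → ℝ) (φ₁ φ₂ : ℝ → ℝ) (c : ℝ → ℝ → ℝ)
    (ϕ₁ ϕ₂ δx δt : ℝ) (N : ℤ) (M : ℕ) (ubar ubbar : ℕ → ℝ) (u : ℕ → ℤ → ℝ) : Prop :=
  InRange N M u ∧ ∀ n < M, ∀ j ∈ Finset.Icc (-N) (N - 1),
    0 ≤ schemeLHS G₁ G₂ φ₁ φ₂ c ϕ₁ ϕ₂ δx δt N ubar ubbar u n j

/-- `u` is a discrete subsolution of the implicit finite volume scheme. -/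
def IsDiscreteSubsolution (G₁ G₂ : ℝ → ℝ → ℝ) (φ₁ φ₂ : ℝ → ℝ) (c : ℝ → ℝ → ℝ)
    (ϕ₁ ϕ₂ δx δt : ℝ) (N : ℤ) (M : ℕ) (ubar ubbar : ℕ → ℝ) (u : ℕ → ℤ → ℝ) : Prop :=
  InRange N M u ∧ ∀ n < M, ∀ j ∈ Finset.Icc (-N) (N - 1),
    schemeLHS G₁ G₂ φ₁ φ₂ c ϕ₁ ϕ₂ δx δt N ubar ubbar u n j ≤ 0

open MeasureTheory in
lemma cell_bounds (f : ℝ → ℝ) (hf : Measurable f) {a b : ℝ} (hab : a < b)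
    (hrange : ∀ x ∈ Set.Ioo a b, f x ∈ Set.Icc (0:ℝ) 1) {A : ℝ}
    (hA : A * (b - a) = ∫ x in a..b, f x) :
    (∃ x ∈ Set.Ioo a b, A ≤ f x) ∧ (∃ x ∈ Set.Ioo a b, f x ≤ A) := by
  have hba : 0 < b - a := sub_pos.2 hab
  have hconst : ∀ c : ℝ, IntegrableOn (fun _ : ℝ => c) (Set.Ioo a b) := by
    intro c
    refine integrableOn_const ?_
    rw [Real.volume_Ioo]; exact ENNReal.ofReal_ne_top
  have hint : IntegrableOn f (Set.Ioo a b) := by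
    refine Integrable.mono' (hconst 1) hf.aestronglyMeasurable.restrict ?_
    filter_upwards [ae_restrict_mem measurableSet_Ioo] with x hx
    have h := hrange x hx
    rw [Real.norm_eq_abs, abs_le]; exact ⟨by linarith [h.1], h.2⟩
  have hIoo : A * (b - a) = ∫ x in Set.Ioo a b, f x := by
    rw [hA, intervalIntegral.integral_of_le hab.le, integral_Ioc_eq_integral_Ioo]
  have hvol : (volume (Set.Ioo a b)).toReal = b - a := by
    rw [Real.volume_Ioo, ENNReal.toReal_ofReal hba.le]
  have hIoopos : (0 : ENNReal) < volume (Set.Ioo a b) := by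
    rw [Real.volume_Ioo]; exact ENNReal.ofReal_pos.2 hba
  constructor
  · by_contra h
    push_neg at h
    have hpos : 0 < ∫ x in Set.Ioo a b, (A - f x) := by
      rw [setIntegral_pos_iff_support_of_nonneg_ae]
      · refine lt_of_lt_of_le hIoopos (measure_mono ?_)
        intro x hx
        refine ⟨?_, hx⟩
        simp only [Function.mem_support]
        intro hc; nlinarith [h x hx]
      · filter_upwards [ae_restrict_mem measurableSet_Ioo] with x hx
        exact sub_nonneg.2 (h x hx).le
      · exact (hconst A).sub hint
    rw [integral_sub (hconst A) hint, setIntegral_const, measureReal_def, hvol, smul_eq_mul, ← hIoo] at hpos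
    linarith
  · by_contra h
    push_neg at h
    have hpos : 0 < ∫ x in Set.Ioo a b, (f x - A) := by
      rw [setIntegral_pos_iff_support_of_nonneg_ae]
      · refine lt_of_lt_of_le hIoopos (measure_mono ?_)
        intro x hx
        refine ⟨?_, hx⟩
        simp only [Function.mem_support]
        intro hc; nlinarith [h x hx]
      · filter_upwards [ae_restrict_mem measurableSet_Ioo] with x hx
        exact sub_nonneg.2 (h x hx).le
      · exact hint.sub (hconst A)
    rw [integral_sub hint (hconst A), setIntegral_const, measureReal_def, hvol, smul_eq_mul, ← hIoo] at hpos
    linarith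

lemma tildePi_lt' {π : ℝ → ℝ} (hπ : StrictMonoOn π (Icc 0 1)) {s t p q : ℝ}
    (hs : s ∈ Icc (0:ℝ) 1) (ht : t ∈ Icc (0:ℝ) 1) (hst : s < t)
    (hp : p ∈ tildePi π s) (hq : q ∈ tildePi π t) : p < q := by
  have hs1 : s ≠ 1 := fun h => by subst h; linarith [ht.2]
  have ht0 : t ≠ 0 := fun h => by subst h; linarith [hs.1]
  have hps : p ≤ π s := by
    unfold tildePi at hp
    by_cases h0 : s = 0
    · rw [if_pos h0] at hp; rw [h0]; exact hp
    · rw [if_neg h0, if_neg hs1] at hp; exact hp.le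
  have hqt : π t ≤ q := by
    unfold tildePi at hq
    by_cases h1 : t = 1
    · rw [if_neg ht0, if_pos h1] at hq; rw [h1]; exact hq
    · rw [if_neg ht0, if_neg h1] at hq; exact hq.ge
  exact lt_of_le_of_lt hps (lt_of_lt_of_le (hπ hs ht hst) hqt)

lemma connects_dichotomy {π₁ π₂ : ℝ → ℝ} (h1 : StrictMonoOn π₁ (Icc 0 1))
    (h2 : StrictMonoOn π₂ (Icc 0 1))
    {c d c' d' : ℝ} (hc : c ∈ Icc (0:ℝ) 1) (hd : d ∈ Icc (0:ℝ) 1)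
    (hc' : c' ∈ Icc (0:ℝ) 1) (hd' : d' ∈ Icc (0:ℝ) 1)
    (h : Connects π₁ π₂ c d) (h' : Connects π₁ π₂ c' d') :
    (c ≤ c' ∧ d ≤ d') ∨ (c' ≤ c ∧ d' ≤ d) := by
  obtain ⟨p, hp1, hp2⟩ := h
  obtain ⟨q, hq1, hq2⟩ := h'
  rcases lt_trichotomy c c' with hlt | heq | hgt
  · have hpq : p < q := tildePi_lt' h1 hc hc' hlt hp1 hq1
    left
    refine ⟨hlt.le, ?_⟩
    by_contra hdd
    push_neg at hdd
    exact absurd (tildePi_lt' h2 hd' hd hdd hq2 hp2) (by linarith)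
  · rcases le_total d d' with hdd | hdd
    · exact Or.inl ⟨heq.le, hdd⟩
    · exact Or.inr ⟨heq.ge, hdd⟩
  · have hpq : q < p := tildePi_lt' h1 hc' hc hgt hq1 hp1
    right
    refine ⟨hgt.le, ?_⟩
    by_contra hdd
    push_neg at hdd
    exact absurd (tildePi_lt' h2 hd hd' hdd hp2 hq2) (by linarith)

lemma abs_le_sSup_G {G : ℝ → ℝ → ℝ}
    (h : ∃ K, LipschitzOnWith K (fun p : ℝ × ℝ => G p.1 p.2) (Icc 0 1 ×ˢ Icc 0 1))
    {a b : ℝ} (ha : a ∈ Icc (0:ℝ) 1) (hb : b ∈ Icc (0:ℝ) 1) :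
    |G a b| ≤ sSup {r : ℝ | ∃ a ∈ Icc (0:ℝ) 1, ∃ b ∈ Icc (0:ℝ) 1, r = |G a b|} := by
  obtain ⟨K, hK⟩ := h
  have h00 : ((0:ℝ), (0:ℝ)) ∈ Icc (0:ℝ) 1 ×ˢ Icc (0:ℝ) 1 :=
    Set.mk_mem_prod ⟨le_refl 0, zero_le_one⟩ ⟨le_refl 0, zero_le_one⟩
  refine le_csSup ⟨|G 0 0| + K, ?_⟩ ⟨a, ha, b, hb, rfl⟩
  rintro r ⟨x, hx, y, hy, rfl⟩
  have hd := hK.dist_le_mul (x, y) (Set.mk_mem_prod hx hy) (0, 0) h00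
  have hdist : dist ((x, y) : ℝ × ℝ) ((0:ℝ), (0:ℝ)) ≤ 1 := by
    rw [Prod.dist_eq]
    simp only [Real.dist_eq, sub_zero]
    rw [abs_of_nonneg hx.1, abs_of_nonneg hy.1]
    exact max_le hx.2 hy.2
  have hKd : dist (G x y) (G 0 0) ≤ K := by
    calc dist (G x y) (G 0 0) ≤ K * dist ((x,y) : ℝ × ℝ) ((0:ℝ),(0:ℝ)) := hd
    _ ≤ K * 1 := mul_le_mul_of_nonneg_left hdist K.2
    _ = K := mul_one _
  rw [Real.dist_eq] at hKd
  calc |G x y| ≤ |G 0 0| + |G x y - G 0 0| := by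
        have h1 := abs_sub_abs_le_abs_sub (G x y) (G 0 0); linarith
  _ ≤ |G 0 0| + K := by linarith

lemma trace_est (φ u : ℝ → ℝ) {a b : ℝ} (hab : a < b) {t : ℝ} (ht : t ∈ Icc a b)
    (hrange : ∀ x ∈ Ioo a b, u x ∈ Icc (0:ℝ) 1)
    (hφ : ∃ K, LipschitzOnWith K φ (Icc 0 1)) (L : ℝ)
    (hLip : ∀ x ∈ Ioo a b, ∀ y ∈ Ioo a b, |φ (u x) - φ (u y)| ≤ L * |x - y|)
    {w : ℝ} (hw : w ∈ Icc (0:ℝ) 1)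
    (hlim : Filter.Tendsto u (nhdsWithin t (Ioo a b)) (nhds w)) :
    ∀ x ∈ Ioo a b, |φ (u x) - φ w| ≤ L * |x - t| := by
  obtain ⟨K, hK⟩ := hφ
  intro x hx
  have hne : (nhdsWithin t (Ioo a b)).NeBot := by
    rw [← mem_closure_iff_nhdsWithin_neBot, closure_Ioo hab.ne]
    exact ht
  have hmem : ∀ᶠ y in nhdsWithin t (Ioo a b), y ∈ Ioo a b := eventually_mem_nhdsWithin
  have hφu : Filter.Tendsto (fun y => φ (u y)) (nhdsWithin t (Ioo a b)) (nhds (φ w)) := by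
    have hcw : ContinuousWithinAt φ (Icc 0 1) w := hK.continuousOn w hw
    refine hcw.tendsto.comp (tendsto_nhdsWithin_iff.2 ⟨hlim, ?_⟩)
    filter_upwards [hmem] with y hy using hrange y hy
  have htend : Filter.Tendsto (fun y => L * |x - y| - |φ (u x) - φ (u y)|)
      (nhdsWithin t (Ioo a b)) (nhds (L * |x - t| - |φ (u x) - φ w|)) := by
    refine Filter.Tendsto.sub ?_ ((tendsto_const_nhds.sub hφu).abs)
    exact tendsto_const_nhds.mul
      ((tendsto_const_nhds.sub (Filter.tendsto_id.mono_left nhdsWithin_le_nhds)).abs)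
  have h0 : 0 ≤ L * |x - t| - |φ (u x) - φ w| := by
    refine ge_of_tendsto htend ?_
    filter_upwards [hmem] with y hy
    linarith [hLip x hx y hy]
  linarith

lemma avg_phi_diff (φ u : ℝ → ℝ) {s t : Set ℝ} (hφmono : MonotoneOn φ (Icc 0 1))
    {C : ℝ}
    (hLip : ∀ x ∈ s, ∀ y ∈ t, |φ (u x) - φ (u y)| ≤ C)
    (hrs : ∀ x ∈ s, u x ∈ Icc (0:ℝ) 1) (hrt : ∀ x ∈ t, u x ∈ Icc (0:ℝ) 1)
    {A B : ℝ} (hA : A ∈ Icc (0:ℝ) 1) (hB : B ∈ Icc (0:ℝ) 1)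
    (hA1 : ∃ x ∈ s, A ≤ u x) (hA2 : ∃ x ∈ s, u x ≤ A)
    (hB1 : ∃ x ∈ t, B ≤ u x) (hB2 : ∃ x ∈ t, u x ≤ B) :
    |φ A - φ B| ≤ C := by
  obtain ⟨x₀, hx₀m, hx₀⟩ := hA1
  obtain ⟨x₁, hx₁m, hx₁⟩ := hA2
  obtain ⟨y₀, hy₀m, hy₀⟩ := hB1
  obtain ⟨y₁, hy₁m, hy₁⟩ := hB2
  rw [abs_le]
  constructor
  · have h1 : φ (u x₁) ≤ φ A := hφmono (hrs x₁ hx₁m) hA hx₁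
    have h2 : φ B ≤ φ (u y₀) := hφmono hB (hrt y₀ hy₀m) hy₀
    have h3 := abs_le.1 (hLip x₁ hx₁m y₀ hy₀m)
    linarith [h3.1]
  · have h1 : φ A ≤ φ (u x₀) := hφmono hA (hrs x₀ hx₀m) hx₀
    have h2 : φ (u y₁) ≤ φ B := hφmono (hrt y₁ hy₁m) hB hy₁
    have h3 := abs_le.1 (hLip x₀ hx₀m y₁ hy₁m)
    linarith [h3.2]

/-- Bound on the initial discrete fluxes: `|F_j⁰| ≤ max_i sup |G_i| + 2L` when
`φ_i ∘ u₀` is `L`-Lipschitz on each `Ω_i` and the initial traces satisfy the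
capillary pressure connection condition. -/
theorem stmt6
    (N : ℕ) (hN : 0 < N) (δx : ℝ) (hδxdef : δx = 1 / (N : ℝ))
    (π₁ π₂ φ₁ φ₂ : ℝ → ℝ) (G₁ G₂ : ℝ → ℝ → ℝ)
    (hπ₁mono : StrictMonoOn π₁ (Icc 0 1)) (hπ₁lip : ∃ K, LipschitzOnWith K π₁ (Icc 0 1))
    (hπ₂mono : StrictMonoOn π₂ (Icc 0 1)) (hπ₂lip : ∃ K, LipschitzOnWith K π₂ (Icc 0 1))
    (hφ₁mono : StrictMonoOn φ₁ (Icc 0 1)) (hφ₁lip : ∃ K, LipschitzOnWith K φ₁ (Icc 0 1))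
    (hφ₁zero : φ₁ 0 = 0)
    (hφ₂mono : StrictMonoOn φ₂ (Icc 0 1)) (hφ₂lip : ∃ K, LipschitzOnWith K φ₂ (Icc 0 1))
    (hφ₂zero : φ₂ 0 = 0)
    (hG₁lip : ∃ K, LipschitzOnWith K (fun p : ℝ × ℝ => G₁ p.1 p.2) (Icc 0 1 ×ˢ Icc 0 1))
    (hG₁mono : ∀ b ∈ Icc (0:ℝ) 1, MonotoneOn (fun a => G₁ a b) (Icc 0 1))
    (hG₁anti : ∀ a ∈ Icc (0:ℝ) 1, AntitoneOn (fun b => G₁ a b) (Icc 0 1))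
    (hG₂lip : ∃ K, LipschitzOnWith K (fun p : ℝ × ℝ => G₂ p.1 p.2) (Icc 0 1 ×ˢ Icc 0 1))
    (hG₂mono : ∀ b ∈ Icc (0:ℝ) 1, MonotoneOn (fun a => G₂ a b) (Icc 0 1))
    (hG₂anti : ∀ a ∈ Icc (0:ℝ) 1, AntitoneOn (fun b => G₂ a b) (Icc 0 1))
    (c d : ℝ → ℝ → ℝ)
    (hcd : ∀ a ∈ Icc (0:ℝ) 1, ∀ b ∈ Icc (0:ℝ) 1,
      (c a b ∈ Icc (0:ℝ) 1 ∧ d a b ∈ Icc (0:ℝ) 1 ∧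
        G₁ a (c a b) - 2 * (φ₁ (c a b) - φ₁ a) / δx
          = G₂ (d a b) b - 2 * (φ₂ b - φ₂ (d a b)) / δx ∧
        Connects π₁ π₂ (c a b) (d a b)) ∧
      ∀ c' d' : ℝ, c' ∈ Icc (0:ℝ) 1 → d' ∈ Icc (0:ℝ) 1 →
        G₁ a c' - 2 * (φ₁ c' - φ₁ a) / δx = G₂ d' b - 2 * (φ₂ b - φ₂ d') / δx →
        Connects π₁ π₂ c' d' → c' = c a b ∧ d' = d a b)
    (u₀ : ℝ → ℝ) (hu₀meas : Measurable u₀)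
    (hu₀range : ∀ x ∈ Ioo (-1:ℝ) 1, u₀ x ∈ Icc (0:ℝ) 1)
    (L : ℝ) (hL : 0 ≤ L)
    (hLip₁ : ∀ x ∈ Ioo (-1:ℝ) 0, ∀ y ∈ Ioo (-1:ℝ) 0, |φ₁ (u₀ x) - φ₁ (u₀ y)| ≤ L * |x - y|)
    (hLip₂ : ∀ x ∈ Ioo (0:ℝ) 1, ∀ y ∈ Ioo (0:ℝ) 1, |φ₂ (u₀ x) - φ₂ (u₀ y)| ≤ L * |x - y|)
    (u01 u02 : ℝ) (hu01 : u01 ∈ Icc (0:ℝ) 1) (hu02 : u02 ∈ Icc (0:ℝ) 1)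
    (hlim1 : Filter.Tendsto u₀ (nhdsWithin 0 (Ioo (-1:ℝ) 0)) (nhds u01))
    (hlim2 : Filter.Tendsto u₀ (nhdsWithin 0 (Ioo (0:ℝ) 1)) (nhds u02))
    (hconn : Connects π₁ π₂ u01 u02)
    (u0d : ℤ → ℝ)
    (hu0d : ∀ j : ℤ, u0d j = (N : ℝ) * ∫ x in ((j : ℝ) / (N : ℝ))..(((j : ℝ) + 1) / (N : ℝ)), u₀ x) :
    ∀ j ∈ Finset.Icc (-(N : ℤ) + 1) ((N : ℤ) - 1),
      |numFlux G₁ G₂ φ₁ φ₂ c δx (N : ℤ) 0 0 u0d j|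
        ≤ max (sSup {r : ℝ | ∃ a ∈ Icc (0:ℝ) 1, ∃ b ∈ Icc (0:ℝ) 1, r = |G₁ a b|})
              (sSup {r : ℝ | ∃ a ∈ Icc (0:ℝ) 1, ∃ b ∈ Icc (0:ℝ) 1, r = |G₂ a b|})
          + 2 * L := by
  intro j hj
  rw [Finset.mem_Icc] at hj
  have hN0 : (0:ℝ) < N := by exact_mod_cast hN
  have hδx : 0 < δx := by rw [hδxdef]; positivity
  have hδx1 : δx ≤ 1 := by
    rw [hδxdef, div_le_one hN0]
    exact_mod_cast hN
  have hjn : j ≠ -(N:ℤ) := by omega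
  have hjN : j ≠ (N:ℤ) := by omega
  set M12 := max (sSup {r : ℝ | ∃ a ∈ Icc (0:ℝ) 1, ∃ b ∈ Icc (0:ℝ) 1, r = |G₁ a b|})
      (sSup {r : ℝ | ∃ a ∈ Icc (0:ℝ) 1, ∃ b ∈ Icc (0:ℝ) 1, r = |G₂ a b|}) with hM12
  have hbound₁ : ∀ {a b : ℝ}, a ∈ Icc (0:ℝ) 1 → b ∈ Icc (0:ℝ) 1 → |G₁ a b| ≤ M12 :=
    fun ha hb => le_trans (abs_le_sSup_G hG₁lip ha hb) (le_max_left _ _)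
  have hbound₂ : ∀ {a b : ℝ}, a ∈ Icc (0:ℝ) 1 → b ∈ Icc (0:ℝ) 1 → |G₂ a b| ≤ M12 :=
    fun ha hb => le_trans (abs_le_sSup_G hG₂lip ha hb) (le_max_right _ _)
  have hneg1 : Ioo (-1:ℝ) 0 ⊆ Ioo (-1:ℝ) 1 := Ioo_subset_Ioo le_rfl (by norm_num)
  have hpos1 : Ioo (0:ℝ) 1 ⊆ Ioo (-1:ℝ) 1 := Ioo_subset_Ioo (by norm_num) le_rfl
  have hsubneg : ∀ k : ℤ, -(N:ℤ) ≤ k → k ≤ -1 →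
      Ioo ((k:ℝ)/(N:ℝ)) (((k:ℝ)+1)/(N:ℝ)) ⊆ Ioo (-1:ℝ) 0 := by
    intro k h1 h2 x hx
    have hk1 : (-(N:ℝ)) ≤ (k:ℝ) := by exact_mod_cast h1
    have hk2 : (k:ℝ) ≤ -1 := by exact_mod_cast h2
    constructor
    · have h3 : (-1:ℝ) ≤ (k:ℝ)/(N:ℝ) := by rw [le_div_iff₀ hN0]; linarith
      linarith [hx.1]
    · have h3 : ((k:ℝ)+1)/(N:ℝ) ≤ 0 := div_nonpos_of_nonpos_of_nonneg (by linarith) hN0.le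
      linarith [hx.2]
  have hsubpos : ∀ k : ℤ, 0 ≤ k → k ≤ (N:ℤ) - 1 →
      Ioo ((k:ℝ)/(N:ℝ)) (((k:ℝ)+1)/(N:ℝ)) ⊆ Ioo (0:ℝ) 1 := by
    intro k h1 h2 x hx
    have hk1 : (0:ℝ) ≤ (k:ℝ) := by exact_mod_cast h1
    have hk2 : (k:ℝ) ≤ (N:ℝ) - 1 := by
      have : (k:ℝ) ≤ ((N:ℤ) - 1 : ℤ) := by exact_mod_cast h2
      push_cast at this; linarith
    constructor
    · have h3 : (0:ℝ) ≤ (k:ℝ)/(N:ℝ) := div_nonneg hk1 hN0.le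
      linarith [hx.1]
    · have h3 : ((k:ℝ)+1)/(N:ℝ) ≤ 1 := by rw [div_le_one hN0]; linarith
      linarith [hx.2]
  have key : ∀ k : ℤ, Ioo ((k:ℝ)/(N:ℝ)) (((k:ℝ)+1)/(N:ℝ)) ⊆ Ioo (-1:ℝ) 1 →
      u0d k ∈ Icc (0:ℝ) 1 ∧
      (∃ x ∈ Ioo ((k:ℝ)/(N:ℝ)) (((k:ℝ)+1)/(N:ℝ)), u0d k ≤ u₀ x) ∧
      (∃ x ∈ Ioo ((k:ℝ)/(N:ℝ)) (((k:ℝ)+1)/(N:ℝ)), u₀ x ≤ u0d k) := by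
    intro k hsub
    have hab : (k:ℝ)/(N:ℝ) < ((k:ℝ)+1)/(N:ℝ) := by
      rw [div_lt_div_iff₀ hN0 hN0]; nlinarith
    have hA : u0d k * (((k:ℝ)+1)/(N:ℝ) - (k:ℝ)/(N:ℝ))
        = ∫ x in ((k:ℝ)/(N:ℝ))..(((k:ℝ)+1)/(N:ℝ)), u₀ x := by
      rw [hu0d k]
      field_simp
      ring
    obtain ⟨h1, h2⟩ := cell_bounds u₀ hu₀meas hab (fun x hx => hu₀range x (hsub hx)) hA
    refine ⟨?_, h1, h2⟩
    obtain ⟨x, hxm, hx⟩ := h1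
    obtain ⟨y, hym, hy⟩ := h2
    exact ⟨le_trans (hu₀range y (hsub hym)).1 hy, le_trans hx (hu₀range x (hsub hxm)).2⟩
  rcases lt_trichotomy j 0 with hjlt | hj0 | hjgt
  · -- j < 0
    have hFeq : numFlux G₁ G₂ φ₁ φ₂ c δx (N:ℤ) 0 0 u0d j
        = G₁ (u0d (j-1)) (u0d j) - (φ₁ (u0d j) - φ₁ (u0d (j-1))) / δx := by
      simp only [numFlux, if_neg hjn, if_neg hjN, if_pos hjlt]
    have hsj : Ioo ((j:ℝ)/(N:ℝ)) (((j:ℝ)+1)/(N:ℝ)) ⊆ Ioo (-1:ℝ) 0 :=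
      hsubneg j (by omega) (by omega)
    have hsj' : Ioo (((j-1:ℤ):ℝ)/(N:ℝ)) ((((j-1:ℤ):ℝ)+1)/(N:ℝ)) ⊆ Ioo (-1:ℝ) 0 :=
      hsubneg (j-1) (by omega) (by omega)
    obtain ⟨hAmem, hw1, hw2⟩ := key j (hsj.trans hneg1)
    obtain ⟨hA'mem, hw3, hw4⟩ := key (j-1) (hsj'.trans hneg1)
    have hcast : ((j-1 : ℤ):ℝ) = (j:ℝ) - 1 := by push_cast; ring
    have hdiam : ∀ x ∈ Ioo ((j:ℝ)/(N:ℝ)) (((j:ℝ)+1)/(N:ℝ)),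
        ∀ y ∈ Ioo (((j-1:ℤ):ℝ)/(N:ℝ)) ((((j-1:ℤ):ℝ)+1)/(N:ℝ)),
        |φ₁ (u₀ x) - φ₁ (u₀ y)| ≤ L * (2*δx) := by
      intro x hx y hy
      have h1 := hLip₁ x (hsj hx) y (hsj' hy)
      have hxy : |x - y| ≤ 2 * δx := by
        rw [hcast] at hy
        have e1 : ((j:ℝ)-1)/(N:ℝ) = (j:ℝ)/(N:ℝ) - δx := by rw [hδxdef]; ring
        have e2 : ((j:ℝ)+1)/(N:ℝ) = (j:ℝ)/(N:ℝ) + δx := by rw [hδxdef]; ring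
        have e3 : (((j:ℝ)-1)+1)/(N:ℝ) = (j:ℝ)/(N:ℝ) := by ring_nf
        rw [e1, e3] at hy
        rw [e2] at hx
        rw [abs_le]
        constructor <;> [linarith [hx.1, hy.2]; linarith [hx.2, hy.1]]
      calc |φ₁ (u₀ x) - φ₁ (u₀ y)| ≤ L * |x - y| := h1
      _ ≤ L * (2*δx) := mul_le_mul_of_nonneg_left hxy hL
    have hdiff : |φ₁ (u0d j) - φ₁ (u0d (j-1))| ≤ L * (2*δx) :=
      avg_phi_diff φ₁ u₀ hφ₁mono.monotoneOn hdiam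
        (fun x hx => hu₀range x (hneg1 (hsj hx)))
        (fun x hx => hu₀range x (hneg1 (hsj' hx)))
        hAmem hA'mem hw1 hw2 hw3 hw4
    rw [hFeq]
    have hGb := hbound₁ hA'mem hAmem
    have habs : |(φ₁ (u0d j) - φ₁ (u0d (j-1))) / δx| ≤ 2*L := by
      rw [abs_div, abs_of_pos hδx, div_le_iff₀ hδx]
      linarith
    calc |G₁ (u0d (j-1)) (u0d j) - (φ₁ (u0d j) - φ₁ (u0d (j-1))) / δx|
        ≤ |G₁ (u0d (j-1)) (u0d j)| + |(φ₁ (u0d j) - φ₁ (u0d (j-1))) / δx| := abs_sub _ _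
    _ ≤ M12 + 2*L := add_le_add hGb habs
  · -- j = 0
    subst hj0
    have hFeq : numFlux G₁ G₂ φ₁ φ₂ c δx (N:ℤ) 0 0 u0d 0
        = G₁ (u0d (-1)) (c (u0d (-1)) (u0d 0))
          - 2 * (φ₁ (c (u0d (-1)) (u0d 0)) - φ₁ (u0d (-1))) / δx := by
      simp only [numFlux, if_neg hjn, if_neg hjN, if_neg (lt_irrefl (0:ℤ)), if_pos rfl, if_true]
    have hs1 : Ioo (((-1:ℤ):ℝ)/(N:ℝ)) ((((-1:ℤ):ℝ)+1)/(N:ℝ)) ⊆ Ioo (-1:ℝ) 0 :=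
      hsubneg (-1) (by omega) (by omega)
    have hs2 : Ioo (((0:ℤ):ℝ)/(N:ℝ)) ((((0:ℤ):ℝ)+1)/(N:ℝ)) ⊆ Ioo (0:ℝ) 1 :=
      hsubpos 0 (by omega) (by omega)
    obtain ⟨hAmem, hwA1, hwA2⟩ := key (-1) (hs1.trans hneg1)
    obtain ⟨hBmem, hwB1, hwB2⟩ := key 0 (hs2.trans hpos1)
    obtain ⟨⟨hccmem, hddmem, heq, hconn'⟩, -⟩ := hcd (u0d (-1)) hAmem (u0d 0) hBmem
    have hrneg : ∀ x ∈ Ioo (-1:ℝ) 0, u₀ x ∈ Icc (0:ℝ) 1 := fun x hx => hu₀range x (hneg1 hx)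
    have hrpos : ∀ x ∈ Ioo (0:ℝ) 1, u₀ x ∈ Icc (0:ℝ) 1 := fun x hx => hu₀range x (hpos1 hx)
    have htr1 := trace_est φ₁ u₀ (show (-1:ℝ) < 0 by norm_num)
      (show (0:ℝ) ∈ Icc (-1:ℝ) 0 from ⟨by norm_num, le_rfl⟩) hrneg hφ₁lip L hLip₁ hu01 hlim1
    have htr2 := trace_est φ₂ u₀ (show (0:ℝ) < 1 by norm_num)
      (show (0:ℝ) ∈ Icc (0:ℝ) 1 from ⟨le_rfl, by norm_num⟩) hrpos hφ₂lip L hLip₂ hu02 hlim2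
    have e1 : ((-1:ℤ):ℝ)/(N:ℝ) = -δx := by push_cast; rw [hδxdef]; ring
    have e2 : (((-1:ℤ):ℝ)+1)/(N:ℝ) = 0 := by push_cast; norm_num
    have e3 : ((0:ℤ):ℝ)/(N:ℝ) = 0 := by push_cast; norm_num
    have e4 : (((0:ℤ):ℝ)+1)/(N:ℝ) = δx := by rw [hδxdef]; push_cast; norm_num
    have hxb1 : ∀ x ∈ Ioo (((-1:ℤ):ℝ)/(N:ℝ)) ((((-1:ℤ):ℝ)+1)/(N:ℝ)), |x - 0| ≤ δx := by
      intro x hx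
      rw [e1, e2] at hx
      rw [sub_zero, abs_of_neg hx.2]
      linarith [hx.1]
    have hxb2 : ∀ x ∈ Ioo (((0:ℤ):ℝ)/(N:ℝ)) ((((0:ℤ):ℝ)+1)/(N:ℝ)), |x - 0| ≤ δx := by
      intro x hx
      rw [e3, e4] at hx
      rw [sub_zero, abs_of_pos hx.1]
      linarith [hx.2]
    have hA1 : |φ₁ (u0d (-1)) - φ₁ u01| ≤ L * δx := by
      rw [abs_le]
      constructor
      · obtain ⟨x₁, hx₁m, hx₁⟩ := hwA2
        have hm : φ₁ (u₀ x₁) ≤ φ₁ (u0d (-1)) :=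
          hφ₁mono.monotoneOn (hrneg x₁ (hs1 hx₁m)) hAmem hx₁
        have ht := abs_le.1 (htr1 x₁ (hs1 hx₁m))
        have hb := mul_le_mul_of_nonneg_left (hxb1 x₁ hx₁m) hL
        linarith [ht.1]
      · obtain ⟨x₀, hx₀m, hx₀⟩ := hwA1
        have hm : φ₁ (u0d (-1)) ≤ φ₁ (u₀ x₀) :=
          hφ₁mono.monotoneOn hAmem (hrneg x₀ (hs1 hx₀m)) hx₀
        have ht := abs_le.1 (htr1 x₀ (hs1 hx₀m))
        have hb := mul_le_mul_of_nonneg_left (hxb1 x₀ hx₀m) hL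
        linarith [ht.2]
    have hB1 : |φ₂ (u0d 0) - φ₂ u02| ≤ L * δx := by
      rw [abs_le]
      constructor
      · obtain ⟨x₁, hx₁m, hx₁⟩ := hwB2
        have hm : φ₂ (u₀ x₁) ≤ φ₂ (u0d 0) :=
          hφ₂mono.monotoneOn (hrpos x₁ (hs2 hx₁m)) hBmem hx₁
        have ht := abs_le.1 (htr2 x₁ (hs2 hx₁m))
        have hb := mul_le_mul_of_nonneg_left (hxb2 x₁ hx₁m) hL
        linarith [ht.1]
      · obtain ⟨x₀, hx₀m, hx₀⟩ := hwB1
        have hm : φ₂ (u0d 0) ≤ φ₂ (u₀ x₀) :=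
          hφ₂mono.monotoneOn hBmem (hrpos x₀ (hs2 hx₀m)) hx₀
        have ht := abs_le.1 (htr2 x₀ (hs2 hx₀m))
        have hb := mul_le_mul_of_nonneg_left (hxb2 x₀ hx₀m) hL
        linarith [ht.2]
    have hG1b := hbound₁ hAmem hccmem
    have hG2b := hbound₂ hddmem hBmem
    have hA1' := abs_le.1 hA1
    have hB1' := abs_le.1 hB1
    rw [hFeq, abs_le]
    rcases connects_dichotomy hπ₁mono hπ₂mono hccmem hddmem hu01 hu02 hconn' hconn with
      ⟨h1, h2⟩ | ⟨h1, h2⟩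
    · constructor
      · have hm : φ₁ (c (u0d (-1)) (u0d 0)) ≤ φ₁ u01 := hφ₁mono.monotoneOn hccmem hu01 h1
        have hdiv : 2 * (φ₁ (c (u0d (-1)) (u0d 0)) - φ₁ (u0d (-1))) / δx ≤ 2*L := by
          rw [div_le_iff₀ hδx]
          linarith [hA1'.1]
        have hna := neg_abs_le (G₁ (u0d (-1)) (c (u0d (-1)) (u0d 0)))
        linarith
      · rw [heq]
        have hm : φ₂ (d (u0d (-1)) (u0d 0)) ≤ φ₂ u02 := hφ₂mono.monotoneOn hddmem hu02 h2
        have hdiv : -(2*L) ≤ 2 * (φ₂ (u0d 0) - φ₂ (d (u0d (-1)) (u0d 0))) / δx := by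
          rw [le_div_iff₀ hδx]
          linarith [hB1'.1]
        have hsa := le_abs_self (G₂ (d (u0d (-1)) (u0d 0)) (u0d 0))
        linarith
    · constructor
      · rw [heq]
        have hm : φ₂ u02 ≤ φ₂ (d (u0d (-1)) (u0d 0)) := hφ₂mono.monotoneOn hu02 hddmem h2
        have hdiv : 2 * (φ₂ (u0d 0) - φ₂ (d (u0d (-1)) (u0d 0))) / δx ≤ 2*L := by
          rw [div_le_iff₀ hδx]
          linarith [hB1'.2]
        have hna := neg_abs_le (G₂ (d (u0d (-1)) (u0d 0)) (u0d 0))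
        linarith
      · have hm : φ₁ u01 ≤ φ₁ (c (u0d (-1)) (u0d 0)) := hφ₁mono.monotoneOn hu01 hccmem h1
        have hdiv : -(2*L) ≤ 2 * (φ₁ (c (u0d (-1)) (u0d 0)) - φ₁ (u0d (-1))) / δx := by
          rw [le_div_iff₀ hδx]
          linarith [hA1'.2]
        have hsa := le_abs_self (G₁ (u0d (-1)) (c (u0d (-1)) (u0d 0)))
        linarith
  · -- j > 0
    have hFeq : numFlux G₁ G₂ φ₁ φ₂ c δx (N:ℤ) 0 0 u0d j
        = G₂ (u0d (j-1)) (u0d j) - (φ₂ (u0d j) - φ₂ (u0d (j-1))) / δx := by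
      simp only [numFlux, if_neg hjn, if_neg hjN, if_neg (by omega : ¬ j < 0),
        if_neg (by omega : ¬ j = 0)]
    have hsj : Ioo ((j:ℝ)/(N:ℝ)) (((j:ℝ)+1)/(N:ℝ)) ⊆ Ioo (0:ℝ) 1 :=
      hsubpos j (by omega) (by omega)
    have hsj' : Ioo (((j-1:ℤ):ℝ)/(N:ℝ)) ((((j-1:ℤ):ℝ)+1)/(N:ℝ)) ⊆ Ioo (0:ℝ) 1 :=
      hsubpos (j-1) (by omega) (by omega)
    obtain ⟨hAmem, hw1, hw2⟩ := key j (hsj.trans hpos1)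
    obtain ⟨hA'mem, hw3, hw4⟩ := key (j-1) (hsj'.trans hpos1)
    have hcast : ((j-1 : ℤ):ℝ) = (j:ℝ) - 1 := by push_cast; ring
    have hdiam : ∀ x ∈ Ioo ((j:ℝ)/(N:ℝ)) (((j:ℝ)+1)/(N:ℝ)),
        ∀ y ∈ Ioo (((j-1:ℤ):ℝ)/(N:ℝ)) ((((j-1:ℤ):ℝ)+1)/(N:ℝ)),
        |φ₂ (u₀ x) - φ₂ (u₀ y)| ≤ L * (2*δx) := by
      intro x hx y hy
      have h1 := hLip₂ x (hsj hx) y (hsj' hy)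
      have hxy : |x - y| ≤ 2 * δx := by
        rw [hcast] at hy
        have e1 : ((j:ℝ)-1)/(N:ℝ) = (j:ℝ)/(N:ℝ) - δx := by rw [hδxdef]; ring
        have e2 : ((j:ℝ)+1)/(N:ℝ) = (j:ℝ)/(N:ℝ) + δx := by rw [hδxdef]; ring
        have e3 : (((j:ℝ)-1)+1)/(N:ℝ) = (j:ℝ)/(N:ℝ) := by ring_nf
        rw [e1, e3] at hy
        rw [e2] at hx
        rw [abs_le]
        constructor <;> [linarith [hx.1, hy.2]; linarith [hx.2, hy.1]]
      calc |φ₂ (u₀ x) - φ₂ (u₀ y)| ≤ L * |x - y| := h1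
      _ ≤ L * (2*δx) := mul_le_mul_of_nonneg_left hxy hL
    have hdiff : |φ₂ (u0d j) - φ₂ (u0d (j-1))| ≤ L * (2*δx) :=
      avg_phi_diff φ₂ u₀ hφ₂mono.monotoneOn hdiam
        (fun x hx => hu₀range x (hpos1 (hsj hx)))
        (fun x hx => hu₀range x (hpos1 (hsj' hx)))
        hAmem hA'mem hw1 hw2 hw3 hw4
    rw [hFeq]
    have hGb := hbound₂ hA'mem hAmem
    have habs : |(φ₂ (u0d j) - φ₂ (u0d (j-1))) / δx| ≤ 2*L := by
      rw [abs_div, abs_of_pos hδx, div_le_iff₀ hδx]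
      linarith
    calc |G₂ (u0d (j-1)) (u0d j) - (φ₂ (u0d j) - φ₂ (u0d (j-1))) / δx|
        ≤ |G₂ (u0d (j-1)) (u0d j)| + |(φ₂ (u0d j) - φ₂ (u0d (j-1))) / δx| := abs_sub _ _
    _ ≤ M12 + 2*L := add_le_add hGb habs
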